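/- Let T be a tree on n > 3 vertices, and suppose u and v are two distinct pendant vertices of T that are adjacent to the same vertex. Then the rank (over the rationals) of Max4PC_T equals the rank of Max4PC_{T−u}, and also equals the rank of Max4PC_{T−v}. -/

import Mathlib

open SimpleGraph

variable {V : Type*}

/-- The maximum of the three four-point sums for vertices `w, x, y, z`:
`max (d w x + d y z) (max (d w y + d x z) (d w z + d x y))`.
This is the entry of the matrix `Max4PC` in row `{w,x}` and column `{y,z}`. -/
noncomputable def max4 (G : SimpleGraph V) (w x y z : V) : ℕ :=
  max (G.dist w x + G.dist y z) (max (G.dist w y + G.dist x z) (G.dist w z + G.dist x y))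

/-- The `Max4PC` entry as a symmetric function of two unordered pairs. -/
noncomputable def max4Sym2 (G : SimpleGraph V) : Sym2 V → Sym2 V → ℕ :=
  Sym2.lift₂ ⟨fun w x y z => max4 G w x y z, by
    intro a₁ a₂ b₁ b₂
    simp only [max4]
    constructor
    · rw [show G.dist a₂ a₁ = G.dist a₁ a₂ from G.dist_comm]
      omega
    · rw [show G.dist b₂ b₁ = G.dist b₁ b₂ from G.dist_comm]
      omega⟩

/-- The matrix `Max4PC_T`, with rows and columns indexed by the 2-element
subsets of the vertex set (non-diagonal elements of `Sym2 V`), over `ℚ`. -/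
noncomputable def max4Matrix [Fintype V] [DecidableEq V] (G : SimpleGraph V) :
    Matrix {s : Sym2 V // ¬ s.IsDiag} {s : Sym2 V // ¬ s.IsDiag} ℚ :=
  fun p q => (max4Sym2 G p.1 q.1 : ℚ)

open Matrix

/- ------------------ auxiliary lemmas ------------------ -/

lemma max4Sym2_mk (G : SimpleGraph V) (a b c d : V) :
    max4Sym2 G s(a, b) s(c, d) = max4 G a b c d := rfl

lemma max4_comm (G : SimpleGraph V) (a b c d : V) :
    max4 G a b c d = max4 G c d a b := by
  simp only [max4]
  have h1 : G.dist a c = G.dist c a := G.dist_comm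
  have h2 : G.dist b d = G.dist d b := G.dist_comm
  have h3 : G.dist a d = G.dist d a := G.dist_comm
  have h4 : G.dist b c = G.dist c b := G.dist_comm
  have h5 : G.dist a b = G.dist b a := G.dist_comm
  have h6 : G.dist c d = G.dist d c := G.dist_comm
  omega

lemma max4Matrix_symm [Fintype V] [DecidableEq V] (G : SimpleGraph V) :
    (max4Matrix G)ᵀ = max4Matrix G := by
  funext p q
  obtain ⟨ps, hp⟩ := p
  obtain ⟨qs, hq⟩ := q
  induction ps using Sym2.ind with | _ a b =>
  induction qs using Sym2.ind with | _ c d =>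
  simp only [Matrix.transpose_apply, max4Matrix, max4Sym2_mk]
  exact_mod_cast congrArg (fun n : ℕ => (n : ℚ)) (max4_comm G c d a b)

lemma leaf_unique_nbr [Fintype V] [DecidableEq V] (G : SimpleGraph V) [DecidableRel G.Adj]
    {u w : V} (hu : G.degree u = 1) (huw : G.Adj u w) :
    ∀ y, G.Adj u y → y = w := by
  intro y hy
  obtain ⟨a, ha⟩ := Finset.card_eq_one.mp hu
  have h1 : w ∈ G.neighborFinset u := by simpa using huw
  have h2 : y ∈ G.neighborFinset u := by simpa using hy
  rw [ha, Finset.mem_singleton] at h1 h2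
  rw [h2, h1]

lemma leaf_dist [Fintype V] [DecidableEq V] (G : SimpleGraph V) [DecidableRel G.Adj]
    (hc : G.Connected) {u w : V} (hu : G.degree u = 1) (huw : G.Adj u w) :
    ∀ x, x ≠ u → G.dist u x = G.dist w x + 1 := by
  intro x hx
  have hub : G.dist u x ≤ G.dist w x + 1 := by
    calc G.dist u x ≤ G.dist u w + G.dist w x := hc.dist_triangle
    _ ≤ 1 + G.dist w x := by
        have h1 : G.dist u w ≤ 1 := (G.dist_le huw.toWalk).trans (by simp)
        omega
    _ = G.dist w x + 1 := by omega
  obtain ⟨p, hp⟩ := (hc.preconnected u x).exists_walk_length_eq_dist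
  cases p with
  | nil => exact absurd rfl hx.symm
  | cons h q =>
      rename_i b
      have hb : b = w := leaf_unique_nbr G hu huw b h
      subst hb
      have := G.dist_le q
      simp only [SimpleGraph.Walk.length_cons] at hp
      omega

lemma walk_to_induce (G : SimpleGraph V) (s : Set V) {a b : V}
    (p : G.Walk a b) (ha : a ∈ s) (hb : b ∈ s) (hs : ∀ x ∈ p.support, x ∈ s) :
    ∃ q : (SimpleGraph.induce s G).Walk ⟨a, ha⟩ ⟨b, hb⟩, q.length = p.length := by
  induction p with
  | nil => exact ⟨.nil, rfl⟩
  | @cons a c b h p ih =>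
      have hc : c ∈ s := hs c (by simp)
      obtain ⟨q, hq⟩ := ih hc hb (fun x hx => hs x (by simp [hx]))
      exact ⟨.cons (by simpa using h) q, by simp [hq]⟩

lemma shortest_avoids_leaf [Fintype V] [DecidableEq V] (G : SimpleGraph V) [DecidableRel G.Adj]
    {u w : V} (hu : G.degree u = 1) (huw : G.Adj u w) {a b : V}
    (ha : a ≠ u) (hb : b ≠ u) (p : G.Walk a b) (hp : p.length = G.dist a b) :
    u ∉ p.support := by
  intro hmem
  have hspec := p.take_spec hmem
  set q1 := p.takeUntil u hmem with hq1
  set q2 := p.dropUntil u hmem with hq2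
  have hlen : q1.length + q2.length = p.length := by
    rw [← hspec]; exact (SimpleGraph.Walk.length_append _ _).symm
  obtain ⟨r2, hr2⟩ : ∃ r2 : G.Walk w b, r2.length + 1 = q2.length := by
    cases q2 with
    | nil => exact absurd rfl hb.symm
    | cons h r =>
        rename_i c
        have : c = w := leaf_unique_nbr G hu huw c h
        subst this
        exact ⟨r, by simp⟩
  obtain ⟨r1, hr1⟩ : ∃ r1 : G.Walk a w, r1.length + 1 = q1.length := by
    have hrev : q1.reverse.length = q1.length := q1.length_reverse
    cases hq1r : q1.reverse with
    | nil => exact absurd rfl ha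
    | cons h r =>
        rename_i c
        have : c = w := leaf_unique_nbr G hu huw c h
        subst this
        refine ⟨r.reverse, ?_⟩
        have : q1.reverse.length = r.length + 1 := by rw [hq1r]; simp
        rw [SimpleGraph.Walk.length_reverse]
        omega
  have hle : G.dist a b ≤ (r1.append r2).length := G.dist_le _
  rw [SimpleGraph.Walk.length_append] at hle
  omega

lemma induce_dist [Fintype V] [DecidableEq V] (G : SimpleGraph V) [DecidableRel G.Adj]
    (hc : G.Connected) {u w : V} (hu : G.degree u = 1) (huw : G.Adj u w)
    (a b : {x : V | x ≠ u}) :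
    (SimpleGraph.induce {x : V | x ≠ u} G).dist a b = G.dist a.1 b.1 := by
  obtain ⟨a, ha⟩ := a
  obtain ⟨b, hb⟩ := b
  obtain ⟨p, hp⟩ := (hc.preconnected a b).exists_walk_length_eq_dist
  have havoid := shortest_avoids_leaf G hu huw ha hb p hp
  have hsup : ∀ x ∈ p.support, x ∈ {x : V | x ≠ u} := by
    intro x hx hxu
    exact havoid (hxu ▸ hx)
  obtain ⟨q, hq⟩ := walk_to_induce G {x : V | x ≠ u} p ha hb hsup
  have h1 : (SimpleGraph.induce {x : V | x ≠ u} G).dist ⟨a, ha⟩ ⟨b, hb⟩ ≤ G.dist a b := by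
    have := (SimpleGraph.induce {x : V | x ≠ u} G).dist_le q
    omega
  have h2 : G.dist a b ≤ (SimpleGraph.induce {x : V | x ≠ u} G).dist ⟨a, ha⟩ ⟨b, hb⟩ := by
    have hreach : (SimpleGraph.induce {x : V | x ≠ u} G).Reachable ⟨a, ha⟩ ⟨b, hb⟩ := ⟨q⟩
    obtain ⟨q', hq'⟩ := hreach.exists_walk_length_eq_dist
    have hmap := G.dist_le (q'.map (SimpleGraph.Embedding.induce {x : V | x ≠ u}).toHom)
    rw [SimpleGraph.Walk.length_map] at hmap
    simp only [SimpleGraph.Embedding.coe_toHom] at hmap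
    exact le_trans (le_of_eq (by rfl)) (hmap.trans (le_of_eq hq'))
  exact le_antisymm h1 h2

section Rlemmas
variable (G : SimpleGraph V)
variable {u v w : V}
variable (hc : G.Connected) (huv : u ≠ v) (hwu : w ≠ u) (hwv : w ≠ v)
variable (hLu : ∀ t, t ≠ u → G.dist u t = G.dist w t + 1)
variable (hLv : ∀ t, t ≠ v → G.dist v t = G.dist w t + 1)

include hc huv hwu hwv hLu hLv in
lemma R1 {x : V} (hxu : x ≠ u) (hxv : x ≠ v) (y z : V) (hyz : y ≠ z) :
    max4 G u x y z = max4 G v x y z := by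
  have tri : ∀ a b : V, G.dist a b ≤ G.dist w a + G.dist w b := fun a b => by
    calc G.dist a b ≤ G.dist a w + G.dist w b := hc.dist_triangle
    _ = G.dist w a + G.dist w b := by rw [G.dist_comm (u := a)]
  have dww : G.dist w w = 0 := G.dist_self
  have duu : G.dist u u = 0 := G.dist_self
  have dvv : G.dist v v = 0 := G.dist_self
  have dwu : G.dist w u = 1 := by have := hLu w hwu; have := G.dist_comm (u := u) (v := w); omega
  have dwv : G.dist w v = 1 := by have := hLv w hwv; have := G.dist_comm (u := v) (v := w); omega
  have duv : G.dist u v = 2 := by rw [hLu v huv.symm, dwv]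
  have dvu : G.dist v u = 2 := by rw [hLv u huv, dwu]
  have dux : G.dist u x = G.dist w x + 1 := hLu x hxu
  have dxu : G.dist x u = G.dist w x + 1 := by rw [G.dist_comm]; exact dux
  have dvx : G.dist v x = G.dist w x + 1 := hLv x hxv
  have dxv : G.dist x v = G.dist w x + 1 := by rw [G.dist_comm]; exact dvx
  by_cases hyu : y = u <;> by_cases hyv : y = v <;> by_cases hzu : z = u <;> by_cases hzv : z = v <;>
    first
    | exact absurd (hyu.trans hzu.symm) hyz
    | exact absurd (hyv.trans hzv.symm) hyz
    | exact absurd (hyu.symm.trans hyv) huv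
    | exact absurd (hzu.symm.trans hzv) huv
    | (simp only [max4]
       try rw [hyu]
       try rw [hyv]
       try rw [hzu]
       try rw [hzv]
       try have g1 : G.dist u y = G.dist w y + 1 := hLu y hyu
       try have g1' : G.dist y u = G.dist u y := G.dist_comm
       try have g2 : G.dist v y = G.dist w y + 1 := hLv y hyv
       try have g2' : G.dist y v = G.dist v y := G.dist_comm
       try have g3 : G.dist u z = G.dist w z + 1 := hLu z hzu
       try have g3' : G.dist z u = G.dist u z := G.dist_comm
       try have g4 : G.dist v z = G.dist w z + 1 := hLv z hzv
       try have g4' : G.dist z v = G.dist v z := G.dist_comm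
       try have t1 := tri y z
       try have t2 := tri x z
       try have t3 := tri x y
       try have t4 := tri x u
       try have t5 := tri x v
       try have t6 := tri u z
       try have t7 := tri v z
       try have t8 := tri y u
       try have t9 := tri y v
       omega)

include hc huv hwu hwv hLu hLv in
lemma R2 (y z : V) (hyz : y ≠ z) :
    max4 G u v y z = max4 G v w y z + 1 := by
  have tri : ∀ a b : V, G.dist a b ≤ G.dist w a + G.dist w b := fun a b => by
    calc G.dist a b ≤ G.dist a w + G.dist w b := hc.dist_triangle
    _ = G.dist w a + G.dist w b := by rw [G.dist_comm (u := a)]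
  have dww : G.dist w w = 0 := G.dist_self
  have duu : G.dist u u = 0 := G.dist_self
  have dvv : G.dist v v = 0 := G.dist_self
  have dwu : G.dist w u = 1 := by have := hLu w hwu; have := G.dist_comm (u := u) (v := w); omega
  have dwv : G.dist w v = 1 := by have := hLv w hwv; have := G.dist_comm (u := v) (v := w); omega
  have duw : G.dist u w = 1 := by rw [hLu w hwu, dww]
  have dvw : G.dist v w = 1 := by rw [hLv w hwv, dww]
  have duv : G.dist u v = 2 := by rw [hLu v huv.symm, dwv]
  have dvu : G.dist v u = 2 := by rw [hLv u huv, dwu]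
  by_cases hyu : y = u <;> by_cases hyv : y = v <;> by_cases hzu : z = u <;> by_cases hzv : z = v <;>
    first
    | exact absurd (hyu.trans hzu.symm) hyz
    | exact absurd (hyv.trans hzv.symm) hyz
    | exact absurd (hyu.symm.trans hyv) huv
    | exact absurd (hzu.symm.trans hzv) huv
    | (simp only [max4]
       try rw [hyu]
       try rw [hyv]
       try rw [hzu]
       try rw [hzv]
       try have g1 : G.dist u y = G.dist w y + 1 := hLu y hyu
       try have g1' : G.dist y u = G.dist u y := G.dist_comm
       try have g2 : G.dist v y = G.dist w y + 1 := hLv y hyv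
       try have g2' : G.dist y v = G.dist v y := G.dist_comm
       try have g3 : G.dist u z = G.dist w z + 1 := hLu z hzu
       try have g3' : G.dist z u = G.dist u z := G.dist_comm
       try have g4 : G.dist v z = G.dist w z + 1 := hLv z hzv
       try have g4' : G.dist z v = G.dist v z := G.dist_comm
       try have t1 := tri y z
       try have t6 := tri u z
       try have t7 := tri v z
       try have t8 := tri y u
       try have t9 := tri y v
       try have t10 := tri u v
       try have t11 := tri v u
       omega)

include hc hwv hLv in
lemma R3 {x : V} (hxv : x ≠ v) (y z : V) (hyz : y ≠ z) :
    max4 G v x y z = max4 G w x y z + 1 := by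
  have tri : ∀ a b : V, G.dist a b ≤ G.dist w a + G.dist w b := fun a b => by
    calc G.dist a b ≤ G.dist a w + G.dist w b := hc.dist_triangle
    _ = G.dist w a + G.dist w b := by rw [G.dist_comm (u := a)]
  have dww : G.dist w w = 0 := G.dist_self
  have dvv : G.dist v v = 0 := G.dist_self
  have dwv : G.dist w v = 1 := by have := hLv w hwv; have := G.dist_comm (u := v) (v := w); omega
  have dvw : G.dist v w = 1 := by rw [hLv w hwv, dww]
  have dvx : G.dist v x = G.dist w x + 1 := hLv x hxv
  have dxv : G.dist x v = G.dist v x := G.dist_comm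
  have dxw : G.dist x w = G.dist w x := G.dist_comm
  by_cases hyv : y = v <;> by_cases hzv : z = v <;>
    first
    | exact absurd (hyv.trans hzv.symm) hyz
    | (simp only [max4]
       try rw [hyv]
       try rw [hzv]
       try have g2 : G.dist v y = G.dist w y + 1 := hLv y hyv
       try have g2' : G.dist y v = G.dist v y := G.dist_comm
       try have g4 : G.dist v z = G.dist w z + 1 := hLv z hzv
       try have g4' : G.dist z v = G.dist v z := G.dist_comm
       try have t1 := tri y z
       try have t2 := tri x z
       try have t3 := tri x y
       try have t5 := tri x v
       omega)
end Rlemmas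

lemma rank_eq_of_span {α β : Type*} [Fintype α] [Fintype β] [DecidableEq α] [DecidableEq β]
    (M : Matrix α α ℚ) (e : β → α) (hsym : Mᵀ = M)
    (h : ∀ p, M p ∈ Submodule.span ℚ (Set.range (fun b => M (e b)))) :
    M.rank = (M.submatrix e e).rank := by
  have hspan : Submodule.span ℚ (Set.range M) = Submodule.span ℚ (Set.range (fun b => M (e b))) := by
    apply le_antisymm
    · rw [Submodule.span_le]; rintro _ ⟨p, rfl⟩; exact h p
    · apply Submodule.span_mono; rintro _ ⟨b, rfl⟩; exact ⟨e b, rfl⟩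
  have h1 : M.rank = (M.submatrix e id).rank := by
    rw [Matrix.rank_eq_finrank_span_row, Matrix.rank_eq_finrank_span_row]
    unfold Matrix.row
    have hr : Set.range (M.submatrix e id) = Set.range (fun b => M (e b)) := rfl
    rw [hr, ← hspan]
  have h2 : (M.submatrix e id).rank = (M.submatrix e e).rank := by
    rw [← Matrix.rank_transpose (M.submatrix e id)]
    have ht : (M.submatrix e id)ᵀ = M.submatrix id e := by
      rw [Matrix.transpose_submatrix, hsym]
    rw [ht, Matrix.rank_eq_finrank_span_row, Matrix.rank_eq_finrank_span_row]
    unfold Matrix.row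
    have key : Submodule.span ℚ (Set.range (M.submatrix id e))
        = Submodule.span ℚ (Set.range (M.submatrix e e)) := by
      have e1 : Set.range (M.submatrix id e) = (LinearMap.funLeft ℚ ℚ e) '' (Set.range M) := by
        exact Set.range_comp (LinearMap.funLeft ℚ ℚ e) M
      have e2 : Set.range (M.submatrix e e)
          = (LinearMap.funLeft ℚ ℚ e) '' (Set.range (fun b => M (e b))) := by
        rw [← Set.range_comp]; rfl
      rw [e1, e2, ← Submodule.map_span, ← Submodule.map_span, hspan]
    rw [key]
  rw [h1, h2]

/-- Embedding of non-diagonal pairs of `{x // x ≠ u}` into non-diagonal pairs of `V`. -/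
def embPairs (u : V) (q : {s : Sym2 {x : V | x ≠ u} // ¬ s.IsDiag}) :
    {s : Sym2 V // ¬ s.IsDiag} :=
  ⟨q.1.map Subtype.val, by
    obtain ⟨qs, hq⟩ := q
    induction qs using Sym2.ind with | _ a b =>
    simp only [Sym2.map_pair_eq, Sym2.mk_isDiag_iff] at *
    exact fun h => hq (Subtype.ext h)⟩

lemma max4Matrix_induce_eq [Fintype V] [DecidableEq V] (G : SimpleGraph V) [DecidableRel G.Adj]
    (hc : G.Connected) {u w : V} (hu : G.degree u = 1) (huw : G.Adj u w) :
    max4Matrix (SimpleGraph.induce {x : V | x ≠ u} G)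
      = (max4Matrix G).submatrix (embPairs u) (embPairs u) := by
  funext p q
  obtain ⟨ps, hp⟩ := p
  obtain ⟨qs, hq⟩ := q
  induction ps using Sym2.ind with | _ a b =>
  induction qs using Sym2.ind with | _ c d =>
  simp only [max4Matrix, Matrix.submatrix_apply, embPairs, Sym2.map_pair_eq, max4Sym2_mk]
  have h : max4 (SimpleGraph.induce {x : V | x ≠ u} G) a b c d = max4 G a.1 b.1 c.1 d.1 := by
    simp only [max4, induce_dist G hc hu huw]
  rw [h]

theorem main_lemma {V : Type*} [Fintype V] [DecidableEq V]
    (G : SimpleGraph V) [DecidableRel G.Adj] (hc : G.Connected)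
    (hn : 3 < Fintype.card V) (u v w : V) (huv : u ≠ v)
    (hu : G.degree u = 1) (hv : G.degree v = 1) (huw : G.Adj u w) (hvw : G.Adj v w) :
    (max4Matrix G).rank = (max4Matrix (SimpleGraph.induce {x : V | x ≠ u} G)).rank := by
  have hwu : w ≠ u := huw.symm.ne
  have hwv : w ≠ v := hvw.symm.ne
  have hLu := leaf_dist G hc hu huw
  have hLv := leaf_dist G hc hv hvw
  -- pick x₀ ∉ {u, v, w}
  obtain ⟨x₀, hx₀⟩ : ∃ x₀ : V, x₀ ∉ ({u, v, w} : Finset V) := by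
    by_contra hcon
    push_neg at hcon
    have : (Finset.univ : Finset V) ⊆ {u, v, w} := fun x _ => hcon x
    have := Finset.card_le_card this
    have h3 : ({u, v, w} : Finset V).card ≤ 3 := by
      apply le_trans (Finset.card_insert_le _ _)
      have := Finset.card_insert_le v ({w} : Finset V)
      simp at this ⊢
      omega
    simp only [Finset.card_univ] at this
    omega
  simp only [Finset.mem_insert, Finset.mem_singleton, not_or] at hx₀
  obtain ⟨hx0u, hx0v, hx0w⟩ := hx₀
  replace hx0u : x₀ ≠ u := hx0u
  replace hx0v : x₀ ≠ v := hx0v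
  replace hx0w : x₀ ≠ w := hx0w
  set M := max4Matrix G with hM
  rw [max4Matrix_induce_eq G hc hu huw]
  apply rank_eq_of_span M (embPairs u) (max4Matrix_symm G)
  -- membership of each row in the span of rows avoiding u
  have hmem : ∀ (a b : V) (ha : a ≠ u) (hb : b ≠ u) (hab : ¬(s(a,b) : Sym2 V).IsDiag),
      M ⟨s(a,b), hab⟩ ∈ Set.range (fun q => M (embPairs u q)) := by
    intro a b ha hb hab
    refine ⟨⟨s(⟨a, ha⟩, ⟨b, hb⟩), ?_⟩, ?_⟩
    · simp only [Sym2.mk_isDiag_iff] at hab ⊢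
      exact fun h => hab (congrArg Subtype.val h)
    · apply congrArg M
      apply Subtype.ext
      simp [embPairs, Sym2.map_pair_eq]
  -- rows {u, x} with x ∉ {u, v} equal rows {v, x}
  have hrow1 : ∀ (x : V) (hx : x ≠ u) (hxv : x ≠ v) (h1 : ¬(s(u,x) : Sym2 V).IsDiag)
      (h2 : ¬(s(v,x) : Sym2 V).IsDiag), M ⟨s(u,x), h1⟩ = M ⟨s(v,x), h2⟩ := by
    intro x hx hxv h1 h2
    funext q
    obtain ⟨qs, hq⟩ := q
    induction qs using Sym2.ind with | _ y z =>
    have hyz : y ≠ z := fun h => hq (Sym2.mk_isDiag_iff.mpr h)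
    simp only [hM, max4Matrix, max4Sym2_mk]
    exact_mod_cast congrArg (fun n : ℕ => (n : ℚ))
      (R1 G hc huv hwu hwv hLu hLv hx hxv y z hyz)
  -- the row {u, v}
  have hrow2 : ∀ (h1 : ¬(s(u,v) : Sym2 V).IsDiag) (h2 : ¬(s(v,w) : Sym2 V).IsDiag)
      (h3 : ¬(s(v,x₀) : Sym2 V).IsDiag) (h4 : ¬(s(w,x₀) : Sym2 V).IsDiag),
      M ⟨s(u,v), h1⟩ = M ⟨s(v,w), h2⟩ + (M ⟨s(v,x₀), h3⟩ - M ⟨s(w,x₀), h4⟩) := by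
    intro h1 h2 h3 h4
    funext q
    obtain ⟨qs, hq⟩ := q
    induction qs using Sym2.ind with | _ y z =>
    have hyz : y ≠ z := fun h => hq (Sym2.mk_isDiag_iff.mpr h)
    simp only [hM, max4Matrix, max4Sym2_mk, Pi.add_apply, Pi.sub_apply]
    have e2 := R2 G hc huv hwu hwv hLu hLv y z hyz
    have e3 := R3 G hc hwv hLv hx0v y z hyz
    push_cast [e2, e3]
    ring
  have hclaim : ∀ (x : V) (hx : x ≠ u) (h1 : ¬(s(u,x) : Sym2 V).IsDiag),
      M ⟨s(u,x), h1⟩ ∈ Submodule.span ℚ (Set.range (fun q => M (embPairs u q))) := by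
    intro x hx h1
    by_cases hxv : x = v
    · subst hxv
      rw [hrow2 h1 (by simp only [Sym2.mk_isDiag_iff]; exact Ne.symm hwv)
        (by simp only [Sym2.mk_isDiag_iff]; exact Ne.symm hx0v)
        (by simp only [Sym2.mk_isDiag_iff]; exact Ne.symm hx0w)]
      refine Submodule.add_mem _ (Submodule.subset_span (hmem _ w huv.symm hwu _)) ?_
      exact Submodule.sub_mem _ (Submodule.subset_span (hmem _ x₀ huv.symm hx0u _))
        (Submodule.subset_span (hmem w x₀ hwu hx0u _))
    · rw [hrow1 x hx hxv h1 (by simp only [Sym2.mk_isDiag_iff]; exact fun h => hxv h.symm)]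
      exact Submodule.subset_span (hmem _ x huv.symm hx _)
  intro p
  obtain ⟨ps, hps⟩ := p
  induction ps using Sym2.ind with | _ a b =>
  have hab : a ≠ b := fun h => hps (Sym2.mk_isDiag_iff.mpr h)
  by_cases hau : a = u
  · subst hau
    exact hclaim b hab.symm hps
  · by_cases hbu : b = u
    · subst hbu
      have hswap : (⟨s(a,b), hps⟩ : {s : Sym2 V // ¬ s.IsDiag})
          = ⟨s(b,a), by rwa [Sym2.eq_swap]⟩ := Subtype.ext Sym2.eq_swap
      rw [hswap]
      exact hclaim a hab _
    · exact Submodule.subset_span (hmem a b hau hbu hps)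

/-- If a tree `T` on more than `3` vertices has two distinct pendant vertices `u, v`
adjacent to the same vertex `w`, then the rank of `Max4PC_T` over `ℚ` equals the
rank of `Max4PC_{T-u}`, and also equals the rank of `Max4PC_{T-v}`. -/
theorem rank_max4Matrix_delete_twin_leaf {V : Type*} [Fintype V] [DecidableEq V]
    (G : SimpleGraph V) [DecidableRel G.Adj] (hT : G.IsTree)
    (hn : 3 < Fintype.card V) (u v w : V) (huv : u ≠ v)
    (hu : G.degree u = 1) (hv : G.degree v = 1) (huw : G.Adj u w) (hvw : G.Adj v w) :
    (max4Matrix G).rank = (max4Matrix (SimpleGraph.induce {x : V | x ≠ u} G)).rank ∧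
    (max4Matrix G).rank = (max4Matrix (SimpleGraph.induce {x : V | x ≠ v} G)).rank := by
  exact ⟨main_lemma G hT.isConnected hn u v w huv hu hv huw hvw,
    main_lemma G hT.isConnected hn v u w huv.symm hv hu hvw huw⟩
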